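/- Let z ∈ [0,1] and θ₁, θ₂ ∈ (−π,π] with c = z·e^{iθ₁} + (1−z)·e^{iθ₂}. Then |θ₁| + |θ₂| ≥ 2·arccos|c|. -/

import Mathlib

open Real Complex

lemma key (z θ₁ θ₂ : ℝ) (hz0 : 0 ≤ z) (hz1 : z ≤ 1) :
    |Real.cos ((θ₁ - θ₂)/2)| ≤ ‖(z : ℂ) * Complex.exp (θ₁ * Complex.I) +
        ((1 : ℂ) - z) * Complex.exp (θ₂ * Complex.I)‖ := by
  set c := (z : ℂ) * Complex.exp (θ₁ * Complex.I) + ((1 : ℂ) - z) * Complex.exp (θ₂ * Complex.I)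
  have hre : c.re = z * Real.cos θ₁ + (1 - z) * Real.cos θ₂ := by
    simp [c, Complex.exp_ofReal_mul_I_re, Complex.exp_ofReal_mul_I_im, Complex.add_re,
      Complex.mul_re]
  have him : c.im = z * Real.sin θ₁ + (1 - z) * Real.sin θ₂ := by
    simp [c, Complex.exp_ofReal_mul_I_re, Complex.exp_ofReal_mul_I_im, Complex.add_im,
      Complex.mul_im]
  have hsq : ‖c‖^2 = 1 - 2*z*(1-z)*(1 - Real.cos (θ₁ - θ₂)) := by
    rw [Complex.sq_norm, Complex.normSq_apply, hre, him, Real.cos_sub]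
    linear_combination (z^2) * (Real.sin_sq_add_cos_sq θ₁) + ((1-z)^2) * (Real.sin_sq_add_cos_sq θ₂)
  have hc2 : Real.cos ((θ₁ - θ₂)/2)^2 = 1/2 + Real.cos (θ₁ - θ₂) / 2 := by
    rw [Real.cos_sq]
    ring_nf
  have h2 : (|Real.cos ((θ₁ - θ₂)/2)|)^2 ≤ ‖c‖^2 := by
    rw [_root_.sq_abs, hsq, hc2]
    nlinarith [mul_nonneg (sub_nonneg.2 (Real.cos_le_one (θ₁ - θ₂))) (sq_nonneg (1 - 2*z))]
  nlinarith [h2, abs_nonneg (Real.cos ((θ₁ - θ₂)/2)), norm_nonneg c]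

lemma arccos_anti {x y : ℝ} (hxy : x ≤ y) : Real.arccos y ≤ Real.arccos x := by
  unfold Real.arccos
  have := Real.monotone_arcsin hxy
  linarith

theorem stmt8 (z θ₁ θ₂ : ℝ) (hz0 : 0 ≤ z) (hz1 : z ≤ 1)
    (hθ₁ : θ₁ ∈ Set.Ioc (-Real.pi) Real.pi) (hθ₂ : θ₂ ∈ Set.Ioc (-Real.pi) Real.pi) :
    2 * Real.arccos (‖(z : ℂ) * Complex.exp (θ₁ * Complex.I) +
        ((1 : ℂ) - z) * Complex.exp (θ₂ * Complex.I)‖) ≤ |θ₁| + |θ₂| := by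
  set a := ‖(z : ℂ) * Complex.exp (θ₁ * Complex.I) +
        ((1 : ℂ) - z) * Complex.exp (θ₂ * Complex.I)‖ with ha
  have hkey := key z θ₁ θ₂ hz0 hz1
  rw [← ha] at hkey
  have ha0 : 0 ≤ a := norm_nonneg _
  rcases le_or_gt Real.pi (|θ₁| + |θ₂|) with hS | hS
  · have : Real.arccos a ≤ Real.pi / 2 := Real.arccos_le_pi_div_two.2 ha0
    linarith
  · -- |θ₁ - θ₂| ≤ |θ₁| + |θ₂| < π
    have hd : |θ₁ - θ₂| ≤ |θ₁| + |θ₂| := abs_sub _ _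
    have h1 : Real.cos ((|θ₁| + |θ₂|)/2) ≤ Real.cos (|θ₁ - θ₂|/2) := by
      apply Real.cos_le_cos_of_nonneg_of_le_pi (by positivity) (by linarith [Real.pi_pos]) 
      linarith
    have h2 : Real.cos (|θ₁ - θ₂|/2) = Real.cos ((θ₁ - θ₂)/2) := by
      rw [show |θ₁ - θ₂|/2 = |(θ₁ - θ₂)/2| by rw [abs_div]; norm_num, Real.cos_abs]
    have h3 : Real.cos ((|θ₁| + |θ₂|)/2) ≤ a := by
      rw [h2] at h1; linarith [le_abs_self (Real.cos ((θ₁ - θ₂)/2))]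
    have h4 : Real.arccos a ≤ Real.arccos (Real.cos ((|θ₁| + |θ₂|)/2)) := arccos_anti h3
    rw [Real.arccos_cos (by positivity) (by linarith [Real.pi_pos])] at h4
    linarith
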